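/- The constructors Var and Op on terms behave like free constructors: (1) every good term equals either Var xs x for some xs, x, or Op δ inp binp for some δ and inputs inp, binp with ↑good inp, ↑goodAbs binp, |dom inp| < |var| and |dom binp| < |var|, and every good abstraction equals Abs xs x X for some xs, x and good term X; (2) Var xs x = Var xs' x' implies xs = xs' and x = x'; (3) for good inputs of domain cardinality < |var|, Op δ inp binp = Op δ' inp' binp' implies δ = δ', inp = inp' and binp = binp'; (4) Var xs x never equals Op δ inp binp. -/

import Mathlib

open scoped Classical

universe u

section Binding

variable (var varsort index bindex opsym : Type u)

/-! ### Inputs -/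

/-- An `(α,β)`-input: a partial function from `α` to `β`. -/
abbrev Input (α β : Type u) : Type u := α → Option β

/-- The domain of an input. -/
def idom {α β : Type u} (inp : Input α β) : Set α := {a | inp a ≠ none}

/-- The componentwise lifting of a predicate to inputs. -/
def liftP {α β : Type u} (P : β → Prop) (inp : Input α β) : Prop :=
  ∀ a b, inp a = some b → P b

/-- The componentwise lifting of a function to inputs. -/
def liftF {α β γ : Type u} (f : β → γ) (inp : Input α β) : Input α γ :=
  fun a => (inp a).map f

/-- An input is small if its domain has cardinality smaller than that of `var`. -/
def smallDom {α β : Type u} (inp : Input α β) : Prop :=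
  Cardinal.mk (idom inp) < Cardinal.mk var

/-! ### Quasiterms -/

mutual
/-- Quasiterms: raw terms before quotienting by alpha-equivalence. -/
inductive QTerm : Type u where
  | qVar : varsort → var → QTerm
  | qOp : opsym → (index → Option QTerm) → (bindex → Option QAbs) → QTerm
/-- Quasiabstractions. -/
inductive QAbs : Type u where
  | qAbs : varsort → var → QTerm → QAbs
end

/-- Transposition of two variables. -/
noncomputable def swapVar (z1 z2 x : var) : var :=
  if x = z1 then z2 else if x = z2 then z1 else x

/-- Sort-aware transposition of variables (acts only on variables of varsort `zs`). -/
noncomputable def swapVarS (zs xs : varsort) (z1 z2 x : var) : var :=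
  if xs = zs then swapVar var z1 z2 x else x

variable {var varsort index bindex opsym}

/-- Swapping of the variables `z1`, `z2` at varsort `zs` in a quasiterm
(transposing them everywhere, including binding positions). -/
noncomputable def qSwap (z1 z2 : var) (zs : varsort) :
    QTerm var varsort index bindex opsym → QTerm var varsort index bindex opsym :=
  QTerm.rec (motive_1 := fun _ => QTerm var varsort index bindex opsym)
    (motive_2 := fun _ => QAbs var varsort index bindex opsym)
    (motive_3 := fun _ => Option (QTerm var varsort index bindex opsym))
    (motive_4 := fun _ => Option (QAbs var varsort index bindex opsym))
    (fun xs x => .qVar xs (swapVarS var varsort zs xs z1 z2 x))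
    (fun d _ _ rinp rbinp => .qOp d rinp rbinp)
    (fun xs x _ rX => .qAbs xs (swapVarS var varsort zs xs z1 z2 x) rX)
    none (fun _ r => some r) none (fun _ r => some r)

/-- Swapping of variables in a quasiabstraction. -/
noncomputable def qSwapAbs (z1 z2 : var) (zs : varsort) :
    QAbs var varsort index bindex opsym → QAbs var varsort index bindex opsym
  | .qAbs xs x X => .qAbs xs (swapVarS var varsort zs xs z1 z2 x) (qSwap z1 z2 zs X)

/-! ### Freshness and goodness -/

mutual
/-- `QFresh ys y X`: the variable `y` of varsort `ys` has no free occurrence in `X`. -/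
inductive QFresh : varsort → var → QTerm var varsort index bindex opsym → Prop where
  | qVar : ∀ {ys y xs x}, (ys, y) ≠ (xs, x) → QFresh ys y (.qVar xs x)
  | qOp : ∀ {ys y d inp binp}, (∀ i X, inp i = some X → QFresh ys y X) →
      (∀ j A, binp j = some A → QFreshAbs ys y A) → QFresh ys y (.qOp d inp binp)
/-- Freshness for quasiabstractions. -/
inductive QFreshAbs : varsort → var → QAbs var varsort index bindex opsym → Prop where
  | qAbs_bound : ∀ {xs x X}, QFreshAbs xs x (.qAbs xs x X)
  | qAbs_body : ∀ {ys y xs x X}, QFresh ys y X → QFreshAbs ys y (.qAbs xs x X)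
end

mutual
/-- Good quasiterms: all constructors branch less than `|var|`. -/
inductive QGood : QTerm var varsort index bindex opsym → Prop where
  | qVar : ∀ {xs x}, QGood (.qVar xs x)
  | qOp : ∀ {d inp binp}, (∀ i X, inp i = some X → QGood X) →
      (∀ j A, binp j = some A → QGoodAbs A) →
      smallDom var inp → smallDom var binp → QGood (.qOp d inp binp)
/-- Good quasiabstractions. -/
inductive QGoodAbs : QAbs var varsort index bindex opsym → Prop where
  | qAbs : ∀ {xs x X}, QGood X → QGoodAbs (.qAbs xs x X)
end

/-! ### Alpha-equivalence -/

mutual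
/-- Alpha-equivalence of quasiterms. -/
inductive Alpha : QTerm var varsort index bindex opsym →
    QTerm var varsort index bindex opsym → Prop where
  | qVar : ∀ {xs x}, Alpha (.qVar xs x) (.qVar xs x)
  | qOp : ∀ {d inp binp inp' binp'},
      (∀ i, inp i = none ↔ inp' i = none) →
      (∀ i X X', inp i = some X → inp' i = some X' → Alpha X X') →
      (∀ j, binp j = none ↔ binp' j = none) →
      (∀ j A A', binp j = some A → binp' j = some A' → AlphaAbs A A') →
      Alpha (.qOp d inp binp) (.qOp d inp' binp')
/-- Alpha-equivalence of quasiabstractions (the exists-fresh formulation). -/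
inductive AlphaAbs : QAbs var varsort index bindex opsym →
    QAbs var varsort index bindex opsym → Prop where
  | qAbs : ∀ {xs x x' X X' y}, y ∉ ({x, x'} : Set var) →
      QFresh xs y X → QFresh xs y X' →
      Alpha (qSwap y x xs X) (qSwap y x' xs X') →
      AlphaAbs (.qAbs xs x X) (.qAbs xs x' X')
end

/-! ### Terms and abstractions as quotients -/

variable (var varsort index bindex opsym)

/-- Terms: quasiterms modulo alpha-equivalence. -/
def Term : Type u := Quot (@Alpha var varsort index bindex opsym)

/-- Abstractions: quasiabstractions modulo alpha-equivalence. -/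
def Abstr : Type u := Quot (@AlphaAbs var varsort index bindex opsym)

variable {var varsort index bindex opsym}

/-- The projection from quasiterms to terms. -/
def tmk : QTerm var varsort index bindex opsym → Term var varsort index bindex opsym :=
  Quot.mk _

/-- The projection from quasiabstractions to abstractions. -/
def amk : QAbs var varsort index bindex opsym → Abstr var varsort index bindex opsym :=
  Quot.mk _

/-- A representative of a term. -/
noncomputable def trep (X : Term var varsort index bindex opsym) :
    QTerm var varsort index bindex opsym := Quot.out X

/-- A representative of an abstraction. -/
noncomputable def arep (A : Abstr var varsort index bindex opsym) :
    QAbs var varsort index bindex opsym := Quot.out A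

/-- Good terms. -/
def good (X : Term var varsort index bindex opsym) : Prop := QGood (trep X)

/-- Good abstractions. -/
def goodAbs (A : Abstr var varsort index bindex opsym) : Prop := QGoodAbs (arep A)

/-- The variable-injection constructor on terms. -/
def Var (xs : varsort) (x : var) : Term var varsort index bindex opsym :=
  tmk (.qVar xs x)

/-- The operation constructor on terms. -/
noncomputable def Op (d : opsym) (inp : Input index (Term var varsort index bindex opsym))
    (binp : Input bindex (Abstr var varsort index bindex opsym)) :
    Term var varsort index bindex opsym :=
  tmk (.qOp d (liftF trep inp) (liftF arep binp))

/-- The abstraction constructor. -/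
noncomputable def Abs (xs : varsort) (x : var) (X : Term var varsort index bindex opsym) :
    Abstr var varsort index bindex opsym :=
  amk (.qAbs xs x (trep X))

/-- Freshness on terms. -/
def fresh (ys : varsort) (y : var) (X : Term var varsort index bindex opsym) : Prop :=
  QFresh ys y (trep X)

/-- Freshness on abstractions. -/
def freshAbs (ys : varsort) (y : var) (A : Abstr var varsort index bindex opsym) : Prop :=
  QFreshAbs ys y (arep A)

/-- Swapping on terms. -/
noncomputable def tswap (X : Term var varsort index bindex opsym)
    (z1 z2 : var) (zs : varsort) : Term var varsort index bindex opsym :=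
  tmk (qSwap z1 z2 zs (trep X))

/-! ### Substitution -/

mutual
/-- The graph of capture-avoiding substitution on quasiterms:
`QSubst X Y y ys Z` means that `Z` is a result of substituting `Y` for the free
occurrences of the variable `y` of varsort `ys` in `X` (along a capture-free
representative). -/
inductive QSubst : QTerm var varsort index bindex opsym →
    QTerm var varsort index bindex opsym → var → varsort →
    QTerm var varsort index bindex opsym → Prop where
  | var_eq : ∀ {Y y ys}, QSubst (.qVar ys y) Y y ys Y
  | var_ne : ∀ {Y y ys xs x}, (xs, x) ≠ (ys, y) → QSubst (.qVar xs x) Y y ys (.qVar xs x)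
  | op : ∀ {Y y ys d inp binp inp' binp'},
      (∀ i, inp i = none ↔ inp' i = none) →
      (∀ i X X', inp i = some X → inp' i = some X' → QSubst X Y y ys X') →
      (∀ j, binp j = none ↔ binp' j = none) →
      (∀ j A A', binp j = some A → binp' j = some A' → QSubstAbs A Y y ys A') →
      QSubst (.qOp d inp binp) Y y ys (.qOp d inp' binp')
/-- The graph of capture-avoiding substitution on quasiabstractions. -/
inductive QSubstAbs : QAbs var varsort index bindex opsym →
    QTerm var varsort index bindex opsym → var → varsort →
    QAbs var varsort index bindex opsym → Prop where
  | abs : ∀ {Y y ys xs x X X'}, (xs, x) ≠ (ys, y) → QFresh xs x Y →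
      QSubst X Y y ys X' → QSubstAbs (.qAbs xs x X) Y y ys (.qAbs xs x X')
end

/-- The graph of capture-avoiding substitution on terms. -/
def SubstRel (X Y : Term var varsort index bindex opsym) (y : var) (ys : varsort)
    (Z : Term var varsort index bindex opsym) : Prop :=
  ∃ qX qZ, tmk qX = X ∧ tmk qZ = Z ∧ QSubst qX (trep Y) y ys qZ

/-- Capture-avoiding substitution on terms: `subst X Y y ys` is `X[Y/y]_ys`. -/
noncomputable def subst (X Y : Term var varsort index bindex opsym)
    (y : var) (ys : varsort) : Term var varsort index bindex opsym :=
  if h : ∃ Z, SubstRel X Y y ys Z then h.choose else X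

/-- The graph of capture-avoiding substitution on abstractions. -/
def SubstAbsRel (A : Abstr var varsort index bindex opsym)
    (Y : Term var varsort index bindex opsym) (y : var) (ys : varsort)
    (B : Abstr var varsort index bindex opsym) : Prop :=
  ∃ qA qB, amk qA = A ∧ amk qB = B ∧ QSubstAbs qA (trep Y) y ys qB

/-- Capture-avoiding substitution on abstractions: `substAbs A Y y ys` is `A[Y/y]_ys`. -/
noncomputable def substAbs (A : Abstr var varsort index bindex opsym)
    (Y : Term var varsort index bindex opsym) (y : var) (ys : varsort) :
    Abstr var varsort index bindex opsym :=
  if h : ∃ B, SubstAbsRel A Y y ys B then h.choose else A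

/-! ### Parallel substitution -/

mutual
/-- The graph of capture-avoiding parallel substitution on quasiterms, along an
assignment `ρ : varsort → var → Option qterm`. -/
inductive QPSubst : QTerm var varsort index bindex opsym →
    (varsort → var → Option (QTerm var varsort index bindex opsym)) →
    QTerm var varsort index bindex opsym → Prop where
  | var_some : ∀ {ρ xs x Y}, ρ xs x = some Y → QPSubst (.qVar xs x) ρ Y
  | var_none : ∀ {ρ xs x}, ρ xs x = none → QPSubst (.qVar xs x) ρ (.qVar xs x)
  | op : ∀ {ρ d inp binp inp' binp'},
      (∀ i, inp i = none ↔ inp' i = none) →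
      (∀ i X X', inp i = some X → inp' i = some X' → QPSubst X ρ X') →
      (∀ j, binp j = none ↔ binp' j = none) →
      (∀ j A A', binp j = some A → binp' j = some A' → QPSubstAbs A ρ A') →
      QPSubst (.qOp d inp binp) ρ (.qOp d inp' binp')
/-- The graph of capture-avoiding parallel substitution on quasiabstractions. -/
inductive QPSubstAbs : QAbs var varsort index bindex opsym →
    (varsort → var → Option (QTerm var varsort index bindex opsym)) →
    QAbs var varsort index bindex opsym → Prop where
  | abs : ∀ {ρ xs x X X'}, ρ xs x = none →
      (∀ ys y Y, ρ ys y = some Y → QFresh xs x Y) →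
      QPSubst X ρ X' → QPSubstAbs (.qAbs xs x X) ρ (.qAbs xs x X')
end

/-- Turning a term-valued assignment into a quasiterm-valued one, by picking
representatives. -/
noncomputable def qassign (ρ : varsort → var → Option (Term var varsort index bindex opsym)) :
    varsort → var → Option (QTerm var varsort index bindex opsym) :=
  fun xs x => (ρ xs x).map trep

/-- The graph of parallel substitution on terms. -/
def PSubstRel (X : Term var varsort index bindex opsym)
    (ρ : varsort → var → Option (Term var varsort index bindex opsym))
    (Z : Term var varsort index bindex opsym) : Prop :=
  ∃ qX qZ, tmk qX = X ∧ tmk qZ = Z ∧ QPSubst qX (qassign ρ) qZ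

/-- Capture-avoiding parallel substitution on terms: `psubst X ρ` is `X[ρ]`. -/
noncomputable def psubst (X : Term var varsort index bindex opsym)
    (ρ : varsort → var → Option (Term var varsort index bindex opsym)) :
    Term var varsort index bindex opsym :=
  if h : ∃ Z, PSubstRel X ρ Z then h.choose else X

/-- The graph of parallel substitution on abstractions. -/
def PSubstAbsRel (A : Abstr var varsort index bindex opsym)
    (ρ : varsort → var → Option (Term var varsort index bindex opsym))
    (B : Abstr var varsort index bindex opsym) : Prop :=
  ∃ qA qB, amk qA = A ∧ amk qB = B ∧ QPSubstAbs qA (qassign ρ) qB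

/-- Capture-avoiding parallel substitution on abstractions. -/
noncomputable def psubstAbs (A : Abstr var varsort index bindex opsym)
    (ρ : varsort → var → Option (Term var varsort index bindex opsym)) :
    Abstr var varsort index bindex opsym :=
  if h : ∃ B, PSubstAbsRel A ρ B then h.choose else A


section Lemmas
variable {var varsort index bindex opsym : Type u}

theorem qind {P : QTerm var varsort index bindex opsym → Prop}
    {Q : QAbs var varsort index bindex opsym → Prop}
    (hvar : ∀ xs x, P (.qVar xs x))
    (hop : ∀ d inp binp, (∀ i X, inp i = some X → P X) →
      (∀ j A, binp j = some A → Q A) → P (.qOp d inp binp))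
    (habs : ∀ xs x X, P X → Q (.qAbs xs x X)) :
    (∀ X, P X) ∧ (∀ A, Q A) := by
  refine ⟨fun X => ?_, fun A => ?_⟩
  · exact QTerm.rec (motive_1 := P) (motive_2 := Q)
      (motive_3 := fun o => ∀ X, o = some X → P X)
      (motive_4 := fun o => ∀ A, o = some A → Q A)
      hvar (fun d inp binp h1 h2 => hop d inp binp (fun i => h1 i) (fun j => h2 j))
      habs (fun X h => by cases h) (fun X hX Y h => by cases h; exact hX)
      (fun A h => by cases h) (fun A hA B h => by cases h; exact hA) X
  · exact QAbs.rec (motive_1 := P) (motive_2 := Q)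
      (motive_3 := fun o => ∀ X, o = some X → P X)
      (motive_4 := fun o => ∀ A, o = some A → Q A)
      hvar (fun d inp binp h1 h2 => hop d inp binp (fun i => h1 i) (fun j => h2 j))
      habs (fun X h => by cases h) (fun X hX Y h => by cases h; exact hX)
      (fun A h => by cases h) (fun A hA B h => by cases h; exact hA) A

@[simp] theorem qSwap_qVar (z1 z2 : var) (zs xs : varsort) (x : var) :
    qSwap (index := index) (bindex := bindex) (opsym := opsym) z1 z2 zs (.qVar xs x) =
      .qVar xs (swapVarS var varsort zs xs z1 z2 x) := rfl

@[simp] theorem qSwap_qOp (z1 z2 : var) (zs : varsort) (d : opsym)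
    (inp : index → Option (QTerm var varsort index bindex opsym))
    (binp : bindex → Option (QAbs var varsort index bindex opsym)) :
    qSwap z1 z2 zs (.qOp d inp binp) =
      .qOp d (fun i => (inp i).map (qSwap z1 z2 zs))
        (fun j => (binp j).map (qSwapAbs z1 z2 zs)) := by
  show QTerm.qOp d _ _ = _
  congr 1
  · funext i; cases h : inp i <;> simp [h, qSwap]
  · funext j; cases h : binp j with
    | none => simp [h, qSwap]
    | some A => cases A; simp [h, qSwap, qSwapAbs]

@[simp] theorem qSwapAbs_qAbs (z1 z2 : var) (zs xs : varsort) (x : var)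
    (X : QTerm var varsort index bindex opsym) :
    qSwapAbs z1 z2 zs (.qAbs xs x X) =
      .qAbs xs (swapVarS var varsort zs xs z1 z2 x) (qSwap z1 z2 zs X) := rfl

end Lemmas

section Lemmas2
variable {var varsort index bindex opsym : Type u}

theorem swapVar_eq_swap (z1 z2 x : var) :
    swapVar var z1 z2 x = Equiv.swap z1 z2 x := by
  unfold swapVar
  rcases eq_or_ne x z1 with h | h
  · simp [h, Equiv.swap_apply_left]
  · rcases eq_or_ne x z2 with h2 | h2
    · simp [h, h2, Equiv.swap_apply_right]
    · simp [h, h2, Equiv.swap_apply_of_ne_of_ne h h2]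

theorem swapVar_invol (z1 z2 x : var) :
    swapVar var z1 z2 (swapVar var z1 z2 x) = x := by
  simp [swapVar_eq_swap]

theorem swapVar_self (z x : var) : swapVar var z z x = x := by
  simp [swapVar_eq_swap]

theorem swapVar_comm (z1 z2 x : var) : swapVar var z1 z2 x = swapVar var z2 z1 x := by
  simp [swapVar_eq_swap, Equiv.swap_comm]

theorem swapVar_left (z1 z2 : var) : swapVar var z1 z2 z1 = z2 := by
  simp [swapVar_eq_swap]

theorem swapVar_inj {z1 z2 x y : var} (h : swapVar var z1 z2 x = swapVar var z1 z2 y) :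
    x = y := by
  have := congrArg (swapVar var z1 z2) h
  rwa [swapVar_invol, swapVar_invol] at this

theorem swapVar_of_ne {z1 z2 x : var} (h1 : x ≠ z1) (h2 : x ≠ z2) :
    swapVar var z1 z2 x = x := by
  simp [swapVar, h1, h2]

/-- core commutation at the level of variables -/
theorem swapVar_swapVar (u v a b x : var) :
    swapVar var u v (swapVar var a b x) =
      swapVar var (swapVar var u v a) (swapVar var u v b) (swapVar var u v x) := by
  simp only [swapVar_eq_swap]
  have := Equiv.swap_apply_apply (Equiv.swap u v) a b
  have h2 := congrFun (congrArg (fun e => e.toFun) this) (Equiv.swap u v x)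
  simp only [Equiv.toFun_as_coe, Equiv.Perm.coe_mul, Function.comp_apply] at h2
  simp only [h2]
  simp

theorem swapVarS_invol (zs xs : varsort) (z1 z2 x : var) :
    swapVarS var varsort zs xs z1 z2 (swapVarS var varsort zs xs z1 z2 x) = x := by
  unfold swapVarS
  split_ifs <;> simp [swapVar_invol]

theorem swapVarS_inj {zs xs : varsort} {z1 z2 x y : var}
    (h : swapVarS var varsort zs xs z1 z2 x = swapVarS var varsort zs xs z1 z2 y) : x = y := by
  have := congrArg (swapVarS var varsort zs xs z1 z2) h
  rwa [swapVarS_invol, swapVarS_invol] at this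

theorem swapVarS_self (zs xs : varsort) (z x : var) :
    swapVarS var varsort zs xs z z x = x := by
  unfold swapVarS; split_ifs <;> simp [swapVar_self]

theorem swapVarS_comm (zs xs : varsort) (z1 z2 x : var) :
    swapVarS var varsort zs xs z1 z2 x = swapVarS var varsort zs xs z2 z1 x := by
  unfold swapVarS; split_ifs <;> simp [swapVar_comm]

/-- general commutation at the level of sorted variables -/
theorem swapVarS_swapVarS (zs as xs : varsort) (u v a b x : var) :
    swapVarS var varsort zs xs u v (swapVarS var varsort as xs a b x) =
      swapVarS var varsort as xs (swapVarS var varsort zs as u v a)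
        (swapVarS var varsort zs as u v b) (swapVarS var varsort zs xs u v x) := by
  unfold swapVarS
  rcases eq_or_ne xs as with h1 | h1 <;> rcases eq_or_ne xs zs with h2 | h2
  · subst h1; subst h2
    simp only [if_pos rfl]
    exact swapVar_swapVar u v a b x
  · subst h1; simp [h2]
  · subst h2; simp [h1, Ne.symm h1]
  · simp [h1, h2, Ne.symm h1, Ne.symm h2]
end Lemmas2

section Lemmas3
variable {var varsort index bindex opsym : Type u}

theorem qSwap_invol_pair (z1 z2 : var) (zs : varsort) :
    (∀ X : QTerm var varsort index bindex opsym,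
      qSwap z1 z2 zs (qSwap z1 z2 zs X) = X) ∧
    (∀ A : QAbs var varsort index bindex opsym,
      qSwapAbs z1 z2 zs (qSwapAbs z1 z2 zs A) = A) := by
  refine qind ?_ ?_ ?_
  · intro xs x; simp [swapVarS_invol]
  · intro d inp binp h1 h2
    simp only [qSwap_qOp]
    congr 1
    · funext i; cases h : inp i with
      | none => simp
      | some X => simp [h1 i X h]
    · funext j; cases h : binp j with
      | none => simp
      | some A => simp [h2 j A h]
  · intro xs x X hX; simp [swapVarS_invol, hX]

theorem qSwap_invol (z1 z2 : var) (zs : varsort)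
    (X : QTerm var varsort index bindex opsym) :
    qSwap z1 z2 zs (qSwap z1 z2 zs X) = X := (qSwap_invol_pair z1 z2 zs).1 X

theorem qSwapAbs_invol (z1 z2 : var) (zs : varsort)
    (A : QAbs var varsort index bindex opsym) :
    qSwapAbs z1 z2 zs (qSwapAbs z1 z2 zs A) = A := (qSwap_invol_pair z1 z2 zs).2 A

theorem qSwap_self_pair (z : var) (zs : varsort) :
    (∀ X : QTerm var varsort index bindex opsym, qSwap z z zs X = X) ∧
    (∀ A : QAbs var varsort index bindex opsym, qSwapAbs z z zs A = A) := by
  refine qind ?_ ?_ ?_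
  · intro xs x; simp [swapVarS_self]
  · intro d inp binp h1 h2
    simp only [qSwap_qOp]
    congr 1
    · funext i; cases h : inp i with
      | none => simp
      | some X => simp [h1 i X h]
    · funext j; cases h : binp j with
      | none => simp
      | some A => simp [h2 j A h]
  · intro xs x X hX; simp [swapVarS_self, hX]

theorem qSwap_comm_pair (z1 z2 : var) (zs : varsort) :
    (∀ X : QTerm var varsort index bindex opsym, qSwap z1 z2 zs X = qSwap z2 z1 zs X) ∧
    (∀ A : QAbs var varsort index bindex opsym, qSwapAbs z1 z2 zs A = qSwapAbs z2 z1 zs A) := by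
  refine qind ?_ ?_ ?_
  · intro xs x; simp [swapVarS_comm zs xs z1 z2]
  · intro d inp binp h1 h2
    simp only [qSwap_qOp]
    congr 1
    · funext i; cases h : inp i with
      | none => simp
      | some X => simp [h1 i X h]
    · funext j; cases h : binp j with
      | none => simp
      | some A => simp [h2 j A h]
  · intro xs x X hX
    simp only [qSwapAbs_qAbs, hX]
    rw [swapVarS_comm zs xs z1 z2]

/-- general commutation of swaps on quasiterms -/
theorem qSwap_qSwap_pair (u v a b : var) (zs as : varsort) :
    (∀ X : QTerm var varsort index bindex opsym,
      qSwap u v zs (qSwap a b as X) =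
        qSwap (swapVarS var varsort zs as u v a) (swapVarS var varsort zs as u v b) as
          (qSwap u v zs X)) ∧
    (∀ A : QAbs var varsort index bindex opsym,
      qSwapAbs u v zs (qSwapAbs a b as A) =
        qSwapAbs (swapVarS var varsort zs as u v a) (swapVarS var varsort zs as u v b) as
          (qSwapAbs u v zs A)) := by
  refine qind ?_ ?_ ?_
  · intro xs x; simp only [qSwap_qVar]
    rw [swapVarS_swapVarS]
  · intro d inp binp h1 h2
    simp only [qSwap_qOp]
    congr 1
    · funext i; cases h : inp i with
      | none => simp
      | some X => simp [h1 i X h]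
    · funext j; cases h : binp j with
      | none => simp
      | some A => simp [h2 j A h]
  · intro xs x X hX
    simp only [qSwapAbs_qAbs, hX]
    rw [swapVarS_swapVarS]

theorem qSwap_qSwap (u v a b : var) (zs as : varsort)
    (X : QTerm var varsort index bindex opsym) :
    qSwap u v zs (qSwap a b as X) =
      qSwap (swapVarS var varsort zs as u v a) (swapVarS var varsort zs as u v b) as
        (qSwap u v zs X) := (qSwap_qSwap_pair u v a b zs as).1 X

theorem idom_map {α β γ : Type u} (inp : Input α β) (f : β → γ) :
    idom (fun a => (inp a).map f) = idom inp := by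
  ext a; simp [idom]

theorem smallDom_map {α β γ : Type u} {inp : Input α β} (f : β → γ) :
    smallDom var (fun a => (inp a).map f) ↔ smallDom var inp := by
  unfold smallDom; rw [idom_map]

/-- swapping preserves goodness -/
theorem qGood_swap_pair (z1 z2 : var) (zs : varsort) :
    (∀ X : QTerm var varsort index bindex opsym, QGood X → QGood (qSwap z1 z2 zs X)) ∧
    (∀ A : QAbs var varsort index bindex opsym, QGoodAbs A → QGoodAbs (qSwapAbs z1 z2 zs A)) := by
  refine qind ?_ ?_ ?_
  · intro xs x _; exact QGood.qVar
  · intro d inp binp h1 h2 hg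
    cases hg with
    | qOp hg1 hg2 hs1 hs2 =>
    rw [qSwap_qOp]
    refine QGood.qOp ?_ ?_ ((smallDom_map _).2 hs1) ((smallDom_map _).2 hs2)
    · intro i X hX
      rcases Option.map_eq_some_iff.1 hX with ⟨X0, h0, rfl⟩
      exact h1 i X0 h0 (hg1 i X0 h0)
    · intro j A hA
      rcases Option.map_eq_some_iff.1 hA with ⟨A0, h0, rfl⟩
      exact h2 j A0 h0 (hg2 j A0 h0)
  · intro xs x X hX hg
    cases hg with
    | qAbs hg => exact QGoodAbs.qAbs (hX hg)

theorem qGood_swap_iff (z1 z2 : var) (zs : varsort)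
    (X : QTerm var varsort index bindex opsym) :
    QGood (qSwap z1 z2 zs X) ↔ QGood X := by
  constructor
  · intro h
    have := (qGood_swap_pair z1 z2 zs).1 _ h
    rwa [qSwap_invol] at this
  · exact (qGood_swap_pair z1 z2 zs).1 X

end Lemmas3

section Lemmas4
variable {var varsort index bindex opsym : Type u}

mutual
/-- occurrence (free or bound) of a sorted variable in a quasiterm -/
inductive OccT : varsort → var → QTerm var varsort index bindex opsym → Prop where
  | var : ∀ {xs x}, OccT xs x (.qVar xs x)
  | op : ∀ {ys y d inp binp i X}, inp i = some X → OccT ys y X → OccT ys y (.qOp d inp binp)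
  | opb : ∀ {ys y d inp binp j A}, binp j = some A → OccA ys y A → OccT ys y (.qOp d inp binp)
inductive OccA : varsort → var → QAbs var varsort index bindex opsym → Prop where
  | bound : ∀ {xs x X}, OccA xs x (.qAbs xs x X)
  | body : ∀ {ys y xs x X}, OccT ys y X → OccA ys y (.qAbs xs x X)
end

theorem fresh_of_not_occ :
    (∀ X : QTerm var varsort index bindex opsym, ∀ ys y, ¬ OccT ys y X → QFresh ys y X) ∧
    (∀ A : QAbs var varsort index bindex opsym, ∀ ys y, ¬ OccA ys y A → QFreshAbs ys y A) := by
  refine qind (P := fun X => ∀ ys y, ¬ OccT ys y X → QFresh ys y X)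
    (Q := fun A => ∀ ys y, ¬ OccA ys y A → QFreshAbs ys y A) ?_ ?_ ?_
  · intro xs x ys y h
    refine QFresh.qVar ?_
    intro he
    rw [Prod.ext_iff] at he
    obtain ⟨h1, h2⟩ := he
    exact h (by dsimp at h1 h2; subst h1; subst h2; exact OccT.var)
  · intro d inp binp h1 h2 ys y h
    refine QFresh.qOp ?_ ?_
    · intro i X hX; exact h1 i X hX ys y (fun ho => h (OccT.op hX ho))
    · intro j A hA; exact h2 j A hA ys y (fun ho => h (OccT.opb hA ho))
  · intro xs x X hX ys y h
    exact QFreshAbs.qAbs_body (hX ys y (fun ho => h (OccA.body ho)))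

theorem qFresh_ind {ys : varsort} {y : var}
    {P : QTerm var varsort index bindex opsym → Prop}
    {Q : QAbs var varsort index bindex opsym → Prop}
    (hvar : ∀ xs x, (ys, y) ≠ (xs, x) → P (.qVar xs x))
    (hop : ∀ d inp binp, (∀ i X, inp i = some X → QFresh ys y X) →
      (∀ j A, binp j = some A → QFreshAbs ys y A) →
      (∀ i X, inp i = some X → P X) →
      (∀ j A, binp j = some A → Q A) → P (.qOp d inp binp))
    (hbound : ∀ X, Q (.qAbs ys y X))
    (hbody : ∀ xs x X, QFresh ys y X → P X → Q (.qAbs xs x X)) :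
    (∀ X, QFresh ys y X → P X) ∧
    (∀ A, QFreshAbs ys y A → Q A) := by
  constructor
  · intro X h
    exact QFresh.rec (motive_1 := fun X _ => P X)
      (motive_2 := fun A _ => Q A)
      (fun h => hvar _ _ h)
      (fun hi hb ih1 ih2 => hop _ _ _ hi hb ih1 ih2)
      (hbound _)
      (fun hf ih => hbody _ _ _ hf ih) h
  · intro A h
    exact QFreshAbs.rec (motive_1 := fun X _ => P X)
      (motive_2 := fun A _ => Q A)
      (fun h => hvar _ _ h)
      (fun hi hb ih1 ih2 => hop _ _ _ hi hb ih1 ih2)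
      (hbound _)
      (fun hf ih => hbody _ _ _ hf ih) h

/-- equivariance of freshness -/
theorem qFresh_swap (ys : varsort) (y : var) :
    (∀ (X : QTerm var varsort index bindex opsym), QFresh ys y X →
      ∀ (u v : var) (zs : varsort),
      QFresh ys (swapVarS var varsort zs ys u v y) (qSwap u v zs X)) ∧
    (∀ (A : QAbs var varsort index bindex opsym), QFreshAbs ys y A →
      ∀ (u v : var) (zs : varsort),
      QFreshAbs ys (swapVarS var varsort zs ys u v y) (qSwapAbs u v zs A)) := by
  refine qFresh_ind ?_ ?_ ?_ ?_
  · intro xs x hne u v zs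
    rw [qSwap_qVar]
    refine QFresh.qVar ?_
    intro he
    rw [Prod.ext_iff] at he
    obtain ⟨h1, h2⟩ := he
    dsimp at h1 h2
    subst h1
    exact hne (by rw [swapVarS_inj h2])
  · intro d inp binp hi hb ih1 ih2 u v zs
    rw [qSwap_qOp]
    refine QFresh.qOp ?_ ?_
    · intro i X hX
      rcases Option.map_eq_some_iff.1 hX with ⟨X0, h0, rfl⟩
      exact ih1 i X0 h0 u v zs
    · intro j A hA
      rcases Option.map_eq_some_iff.1 hA with ⟨A0, h0, rfl⟩
      exact ih2 j A0 h0 u v zs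
  · intro X u v zs
    rw [qSwapAbs_qAbs]
    exact QFreshAbs.qAbs_bound
  · intro xs x X hf ih u v zs
    rw [qSwapAbs_qAbs]
    exact QFreshAbs.qAbs_body (ih u v zs)

end Lemmas4

section Lemmas5
variable {var varsort index bindex opsym : Type u}

/-- the set of variables occurring (free or bound, at any sort) in a quasiterm -/
def occSet (X : QTerm var varsort index bindex opsym) : Set var :=
  {y | ∃ ys, OccT ys y X}

def occSetA (A : QAbs var varsort index bindex opsym) : Set var :=
  {y | ∃ ys, OccA ys y A}

theorem mkUnion_lt {A B : Set var} {c : Cardinal}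
    (hc : Cardinal.aleph0 ≤ c)
    (hA : Cardinal.mk A < c) (hB : Cardinal.mk B < c) :
    Cardinal.mk (↥(A ∪ B)) < c :=
  lt_of_le_of_lt (Cardinal.mk_union_le A B) (Cardinal.add_lt_of_lt hc hA hB)

theorem occSet_small (hinf : Cardinal.aleph0 ≤ Cardinal.mk var)
    (hreg : (Cardinal.mk var).IsRegular) :
    (∀ X : QTerm var varsort index bindex opsym, QGood X →
      Cardinal.mk (occSet X) < Cardinal.mk var) ∧
    (∀ A : QAbs var varsort index bindex opsym, QGoodAbs A →
      Cardinal.mk (occSetA A) < Cardinal.mk var) := by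
  refine qind ?_ ?_ ?_
  · intro xs x _
    have hsub : occSet (QTerm.qVar xs x : QTerm var varsort index bindex opsym) ⊆ {x} := by
      intro y hy
      rcases hy with ⟨ys, hy⟩
      cases hy
      exact rfl
    calc Cardinal.mk (occSet (QTerm.qVar xs x : QTerm var varsort index bindex opsym))
        ≤ Cardinal.mk ({x} : Set var) := Cardinal.mk_le_mk_of_subset hsub
      _ = 1 := Cardinal.mk_singleton x
      _ < Cardinal.aleph0 := Cardinal.one_lt_aleph0
      _ ≤ Cardinal.mk var := hinf
  · intro d inp binp ih1 ih2 hg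
    cases hg with
    | qOp hg1 hg2 hs1 hs2 =>
    have hex1 : ∀ i : idom inp, ∃ X0, inp i.1 = some X0 := by
      intro ⟨i, hi⟩
      simp only [idom, Set.mem_setOf_eq] at hi
      exact Option.ne_none_iff_exists'.1 hi
    obtain ⟨f, hf⟩ := Classical.axiomOfChoice hex1
    have hex2 : ∀ j : idom binp, ∃ A0, binp j.1 = some A0 := by
      intro ⟨j, hj⟩
      simp only [idom, Set.mem_setOf_eq] at hj
      exact Option.ne_none_iff_exists'.1 hj
    obtain ⟨g, hgf⟩ := Classical.axiomOfChoice hex2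
    have hsub : occSet (QTerm.qOp d inp binp : QTerm var varsort index bindex opsym) ⊆
        (⋃ i : idom inp, occSet (f i)) ∪ (⋃ j : idom binp, occSetA (g j)) := by
      intro y hy
      rcases hy with ⟨ys, hy⟩
      cases hy with
      | op hX ho =>
        rename_i i X0
        have hi : i ∈ idom inp := by simp [idom, hX]
        have : f ⟨i, hi⟩ = X0 := by
          have := hf ⟨i, hi⟩
          rw [hX] at this
          exact (Option.some_inj.1 this).symm
        exact Or.inl (Set.mem_iUnion.2 ⟨⟨i, hi⟩, by rw [this]; exact ⟨ys, ho⟩⟩)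
      | opb hA ho =>
        rename_i j A0
        have hj : j ∈ idom binp := by simp [idom, hA]
        have : g ⟨j, hj⟩ = A0 := by
          have := hgf ⟨j, hj⟩
          rw [hA] at this
          exact (Option.some_inj.1 this).symm
        exact Or.inr (Set.mem_iUnion.2 ⟨⟨j, hj⟩, by rw [this]; exact ⟨ys, ho⟩⟩)
    refine lt_of_le_of_lt (Cardinal.mk_le_mk_of_subset hsub) (mkUnion_lt hinf ?_ ?_)
    · refine lt_of_le_of_lt Cardinal.mk_iUnion_le_sum_mk
        (Cardinal.sum_lt_of_isRegular hreg hs1 ?_)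
      intro i
      exact ih1 i.1 (f i) (hf i) (hg1 i.1 (f i) (hf i))
    · refine lt_of_le_of_lt Cardinal.mk_iUnion_le_sum_mk
        (Cardinal.sum_lt_of_isRegular hreg hs2 ?_)
      intro j
      exact ih2 j.1 (g j) (hgf j) (hg2 j.1 (g j) (hgf j))
  · intro xs x X ih hg
    cases hg with
    | qAbs hg =>
    have hsub : occSetA (QAbs.qAbs xs x X : QAbs var varsort index bindex opsym) ⊆
        insert x (occSet X) := by
      intro y hy
      rcases hy with ⟨ys, hy⟩
      cases hy with
      | bound => exact Set.mem_insert _ _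
      | body ho => exact Set.mem_insert_of_mem _ ⟨_, ho⟩
    refine lt_of_le_of_lt (Cardinal.mk_le_mk_of_subset hsub) ?_
    refine lt_of_le_of_lt (Cardinal.mk_insert_le) ?_
    exact Cardinal.add_lt_of_lt hinf (ih hg) (lt_of_lt_of_le Cardinal.one_lt_aleph0 hinf)

end Lemmas5

section Lemmas6
variable {var varsort index bindex opsym : Type u}

theorem exists_not_mem_of_small {S : Set var}
    (h : Cardinal.mk S < Cardinal.mk var) : ∃ y, y ∉ S := by
  by_contra hc
  push_neg at hc
  have : S = Set.univ := Set.eq_univ_of_forall hc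
  rw [this, Cardinal.mk_univ] at h
  exact lt_irrefl _ h

theorem alpha_ind
    {P : QTerm var varsort index bindex opsym → QTerm var varsort index bindex opsym → Prop}
    {Q : QAbs var varsort index bindex opsym → QAbs var varsort index bindex opsym → Prop}
    (hvar : ∀ xs x, P (.qVar xs x) (.qVar xs x))
    (hop : ∀ d inp binp inp' binp',
      (∀ i, inp i = none ↔ inp' i = none) →
      (∀ i X X', inp i = some X → inp' i = some X' → Alpha X X') →
      (∀ j, binp j = none ↔ binp' j = none) →
      (∀ j A A', binp j = some A → binp' j = some A' → AlphaAbs A A') →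
      (∀ i X X', inp i = some X → inp' i = some X' → P X X') →
      (∀ j A A', binp j = some A → binp' j = some A' → Q A A') →
      P (.qOp d inp binp) (.qOp d inp' binp'))
    (habs : ∀ xs x x' X X' y, y ∉ ({x, x'} : Set var) →
      QFresh xs y X → QFresh xs y X' →
      Alpha (qSwap y x xs X) (qSwap y x' xs X') →
      P (qSwap y x xs X) (qSwap y x' xs X') →
      Q (.qAbs xs x X) (.qAbs xs x' X')) :
    (∀ X Y, Alpha X Y → P X Y) ∧ (∀ A B, AlphaAbs A B → Q A B) := by
  constructor
  · intro X Y h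
    exact Alpha.rec (motive_1 := fun X Y _ => P X Y) (motive_2 := fun A B _ => Q A B)
      (hvar _ _)
      (fun h1 h2 h3 h4 ih1 ih2 => hop _ _ _ _ _ h1 h2 h3 h4 ih1 ih2)
      (fun hy hf1 hf2 ha ih => habs _ _ _ _ _ _ hy hf1 hf2 ha ih) h
  · intro A B h
    exact AlphaAbs.rec (motive_1 := fun X Y _ => P X Y) (motive_2 := fun A B _ => Q A B)
      (hvar _ _)
      (fun h1 h2 h3 h4 ih1 ih2 => hop _ _ _ _ _ h1 h2 h3 h4 ih1 ih2)
      (fun hy hf1 hf2 ha ih => habs _ _ _ _ _ _ hy hf1 hf2 ha ih) h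

theorem alpha_symm :
    (∀ X Y : QTerm var varsort index bindex opsym, Alpha X Y → Alpha Y X) ∧
    (∀ A B : QAbs var varsort index bindex opsym, AlphaAbs A B → AlphaAbs B A) := by
  refine alpha_ind ?_ ?_ ?_
  · intro xs x; exact Alpha.qVar
  · intro d inp binp inp' binp' h1 h2 h3 h4 ih1 ih2
    exact Alpha.qOp (fun i => (h1 i).symm) (fun i X X' hX hX' => ih1 i X' X hX' hX)
      (fun j => (h3 j).symm) (fun j A A' hA hA' => ih2 j A' A hA' hA)
  · intro xs x x' X X' y hy hf1 hf2 ha ih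
    refine AlphaAbs.qAbs ?_ hf2 hf1 ih
    intro hc
    apply hy
    rcases hc with h | h
    · exact Or.inr h
    · exact Or.inl h

/-- equivariance of alpha -/
theorem alpha_swap :
    (∀ X Y : QTerm var varsort index bindex opsym, Alpha X Y →
      ∀ (u v : var) (zs : varsort), Alpha (qSwap u v zs X) (qSwap u v zs Y)) ∧
    (∀ A B : QAbs var varsort index bindex opsym, AlphaAbs A B →
      ∀ (u v : var) (zs : varsort), AlphaAbs (qSwapAbs u v zs A) (qSwapAbs u v zs B)) := by
  refine alpha_ind ?_ ?_ ?_
  · intro xs x u v zs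
    rw [qSwap_qVar]
    exact Alpha.qVar
  · intro d inp binp inp' binp' h1 h2 h3 h4 ih1 ih2 u v zs
    rw [qSwap_qOp, qSwap_qOp]
    refine Alpha.qOp ?_ ?_ ?_ ?_
    · intro i; simp only [Option.map_eq_none_iff]; exact h1 i
    · intro i X X' hX hX'
      rcases Option.map_eq_some_iff.1 hX with ⟨X0, h0, rfl⟩
      rcases Option.map_eq_some_iff.1 hX' with ⟨X0', h0', rfl⟩
      exact ih1 i X0 X0' h0 h0' u v zs
    · intro j; simp only [Option.map_eq_none_iff]; exact h3 j
    · intro j A A' hA hA'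
      rcases Option.map_eq_some_iff.1 hA with ⟨A0, h0, rfl⟩
      rcases Option.map_eq_some_iff.1 hA' with ⟨A0', h0', rfl⟩
      exact ih2 j A0 A0' h0 h0' u v zs
  · intro xs x x' X X' y hy hf1 hf2 ha ih u v zs
    rw [qSwapAbs_qAbs, qSwapAbs_qAbs]
    refine AlphaAbs.qAbs (y := swapVarS var varsort zs xs u v y) ?_
      ((qFresh_swap xs y).1 X hf1 u v zs) ((qFresh_swap xs y).1 X' hf2 u v zs) ?_
    · intro hc
      apply hy
      rcases hc with h | h
      · exact Or.inl (swapVarS_inj h)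
      · exact Or.inr (swapVarS_inj h)
    · have := ih u v zs
      rw [qSwap_qSwap u v y x zs xs, qSwap_qSwap u v y x' zs xs] at this
      exact this

/-- alpha preserves goodness -/
theorem alpha_good :
    (∀ X Y : QTerm var varsort index bindex opsym, Alpha X Y → (QGood X ↔ QGood Y)) ∧
    (∀ A B : QAbs var varsort index bindex opsym, AlphaAbs A B → (QGoodAbs A ↔ QGoodAbs B)) := by
  refine alpha_ind ?_ ?_ ?_
  · intro xs x; rfl
  · intro d inp binp inp' binp' h1 h2 h3 h4 ih1 ih2
    have hdom1 : idom inp = idom inp' := by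
      ext i; simp only [idom, Set.mem_setOf_eq, not_iff_not.2 (h1 i)]
    have hdom2 : idom binp = idom binp' := by
      ext j; simp only [idom, Set.mem_setOf_eq, not_iff_not.2 (h3 j)]
    constructor
    · rintro hg
      cases hg with
      | qOp hg1 hg2 hs1 hs2 =>
      refine QGood.qOp ?_ ?_ (by rwa [smallDom, ← hdom1]) (by rwa [smallDom, ← hdom2])
      · intro i X' hX'
        have hne : inp i ≠ none := by
          intro hn
          rw [(h1 i).1 hn] at hX'; cases hX'
        rcases Option.ne_none_iff_exists'.1 hne with ⟨X, hX⟩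
        exact (ih1 i X X' hX hX').1 (hg1 i X hX)
      · intro j A' hA'
        have hne : binp j ≠ none := by
          intro hn
          rw [(h3 j).1 hn] at hA'; cases hA'
        rcases Option.ne_none_iff_exists'.1 hne with ⟨A, hA⟩
        exact (ih2 j A A' hA hA').1 (hg2 j A hA)
    · rintro hg
      cases hg with
      | qOp hg1 hg2 hs1 hs2 =>
      refine QGood.qOp ?_ ?_ (by rwa [smallDom, hdom1]) (by rwa [smallDom, hdom2])
      · intro i X hX
        have hne : inp' i ≠ none := by
          intro hn
          rw [(h1 i).2 hn] at hX; cases hX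
        rcases Option.ne_none_iff_exists'.1 hne with ⟨X', hX'⟩
        exact (ih1 i X X' hX hX').2 (hg1 i X' hX')
      · intro j A hA
        have hne : binp' j ≠ none := by
          intro hn
          rw [(h3 j).2 hn] at hA; cases hA
        rcases Option.ne_none_iff_exists'.1 hne with ⟨A', hA'⟩
        exact (ih2 j A A' hA hA').2 (hg2 j A' hA')
  · intro xs x x' X X' y hy hf1 hf2 ha ih
    constructor
    · rintro ⟨hg⟩
      refine QGoodAbs.qAbs ?_
      have h1 : QGood (qSwap y x xs X) := (qGood_swap_iff y x xs X).2 hg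
      have h2 := ih.1 h1
      exact (qGood_swap_iff y x' xs X').1 h2
    · rintro ⟨hg⟩
      refine QGoodAbs.qAbs ?_
      have h1 : QGood (qSwap y x' xs X') := (qGood_swap_iff y x' xs X').2 hg
      have h2 := ih.2 h1
      exact (qGood_swap_iff y x xs X).1 h2

end Lemmas6

section Lemmas7
variable {var varsort index bindex opsym : Type u}

theorem mkInsert_lt (hinf : Cardinal.aleph0 ≤ Cardinal.mk var) {S : Set var}
    (h : Cardinal.mk S < Cardinal.mk var) (a : var) :
    Cardinal.mk (↥(insert a S)) < Cardinal.mk var :=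
  lt_of_le_of_lt Cardinal.mk_insert_le
    (Cardinal.add_lt_of_lt hinf h (lt_of_lt_of_le Cardinal.one_lt_aleph0 hinf))

theorem fresh_of_not_occSet {X : QTerm var varsort index bindex opsym} {y : var}
    (h : y ∉ occSet X) (ys : varsort) : QFresh ys y X :=
  fresh_of_not_occ.1 X ys y (fun ho => h ⟨ys, ho⟩)

/-- reflexivity of alpha on good quasiterms -/
theorem alpha_refl (hinf : Cardinal.aleph0 ≤ Cardinal.mk var)
    (hreg : (Cardinal.mk var).IsRegular) :
    (∀ X : QTerm var varsort index bindex opsym, QGood X → Alpha X X) ∧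
    (∀ A : QAbs var varsort index bindex opsym, QGoodAbs A → AlphaAbs A A) := by
  refine qind ?_ ?_ ?_
  · intro xs x _; exact Alpha.qVar
  · intro d inp binp ih1 ih2 hg
    cases hg with
    | qOp hg1 hg2 hs1 hs2 =>
    refine Alpha.qOp (fun i => Iff.rfl) ?_ (fun j => Iff.rfl) ?_
    · intro i X X' hX hX'
      obtain rfl : X = X' := by rw [hX] at hX'; exact Option.some_inj.1 hX'
      exact ih1 i X hX (hg1 i X hX)
    · intro j A A' hA hA'
      obtain rfl : A = A' := by rw [hA] at hA'; exact Option.some_inj.1 hA'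
      exact ih2 j A hA (hg2 j A hA)
  · intro xs x X ih hg
    cases hg with
    | qAbs hg =>
    obtain ⟨y, hy⟩ := exists_not_mem_of_small
      (mkInsert_lt hinf ((occSet_small hinf hreg).1 X hg) x)
    have hyx : y ≠ x := fun h => hy (Or.inl h)
    have hyX : y ∉ occSet X := fun h => hy (Set.mem_insert_of_mem _ h)
    refine AlphaAbs.qAbs (y := y) ?_ (fresh_of_not_occSet hyX xs) (fresh_of_not_occSet hyX xs)
      (alpha_swap.1 X X (ih hg) y x xs)
    intro hc
    rcases hc with h | h <;> exact hyx h

/-- swapping two fresh variables is alpha-invisible -/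
theorem alpha_fresh_swap (hinf : Cardinal.aleph0 ≤ Cardinal.mk var)
    (hreg : (Cardinal.mk var).IsRegular) :
    (∀ X : QTerm var varsort index bindex opsym, QGood X → ∀ (a b : var) (zs : varsort),
      QFresh zs a X → QFresh zs b X → Alpha (qSwap a b zs X) X) ∧
    (∀ A : QAbs var varsort index bindex opsym, QGoodAbs A → ∀ (a b : var) (zs : varsort),
      QFreshAbs zs a A → QFreshAbs zs b A → AlphaAbs (qSwapAbs a b zs A) A) := by
  refine qind ?_ ?_ ?_
  · intro xs x _ a b zs hfa hfb
    rw [qSwap_qVar]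
    cases hfa with
    | qVar hne1 =>
    cases hfb with
    | qVar hne2 =>
    have : swapVarS var varsort zs xs a b x = x := by
      unfold swapVarS
      split_ifs with h
      · subst h
        refine swapVar_of_ne ?_ ?_ <;> intro hc <;> subst hc
        · exact hne1 rfl
        · exact hne2 rfl
      · rfl
    rw [this]
    exact Alpha.qVar
  · intro d inp binp ih1 ih2 hg a b zs hfa hfb
    cases hg with
    | qOp hg1 hg2 hs1 hs2 =>
    cases hfa with
    | qOp hfa1 hfa2 =>
    cases hfb with
    | qOp hfb1 hfb2 =>
    rw [qSwap_qOp]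
    refine Alpha.qOp ?_ ?_ ?_ ?_
    · intro i; simp [Option.map_eq_none_iff]
    · intro i X X' hX hX'
      rcases Option.map_eq_some_iff.1 hX with ⟨X0, h0, rfl⟩
      obtain rfl : X0 = X' := by rw [h0] at hX'; exact Option.some_inj.1 hX'
      exact ih1 i X0 h0 (hg1 i X0 h0) a b zs (hfa1 i X0 h0) (hfb1 i X0 h0)
    · intro j; simp [Option.map_eq_none_iff]
    · intro j A A' hA hA'
      rcases Option.map_eq_some_iff.1 hA with ⟨A0, h0, rfl⟩
      obtain rfl : A0 = A' := by rw [h0] at hA'; exact Option.some_inj.1 hA'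
      exact ih2 j A0 h0 (hg2 j A0 h0) a b zs (hfa2 j A0 h0) (hfb2 j A0 h0)
  · intro xs x X ih hg a b zs hfa hfb
    cases hg with
    | qAbs hg =>
    rw [qSwapAbs_qAbs]
    rcases eq_or_ne a b with rfl | hab
    · rw [swapVarS_self, (qSwap_self_pair a zs).1 X]
      exact (alpha_refl hinf hreg).2 _ (QGoodAbs.qAbs hg)
    have generic : QFresh zs a X → QFresh zs b X → swapVarS var varsort zs xs a b x = x →
        AlphaAbs (QAbs.qAbs xs (swapVarS var varsort zs xs a b x) (qSwap a b zs X))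
          (QAbs.qAbs xs x X) := by
      intro hfaX hfbX hx1
      rw [hx1]
      have hgs : QGood (qSwap a b zs X) := (qGood_swap_iff a b zs X).2 hg
      obtain ⟨y, hy⟩ := exists_not_mem_of_small (mkInsert_lt hinf
        (mkUnion_lt hinf ((occSet_small hinf hreg).1 X hg)
          ((occSet_small hinf hreg).1 _ hgs)) x)
      have hyx : y ≠ x := fun h => hy (Or.inl h)
      have hyX : y ∉ occSet X := fun h => hy (Or.inr (Or.inl h))
      have hyXs : y ∉ occSet (qSwap a b zs X) := fun h => hy (Or.inr (Or.inr h))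
      refine AlphaAbs.qAbs (y := y) ?_ (fresh_of_not_occSet hyXs xs)
        (fresh_of_not_occSet hyX xs)
        (alpha_swap.1 _ _ (ih hg a b zs hfaX hfbX) y x xs)
      intro hc; rcases hc with h | h <;> exact hyx h
    have key : ∀ b : var, x ≠ b → QFresh zs b X → zs = xs →
        AlphaAbs (QAbs.qAbs xs (swapVarS var varsort zs xs x b x) (qSwap x b zs X))
          (QAbs.qAbs xs x X) := by
      intro b hxb hfbX hzs
      subst hzs
      have hx1 : swapVarS var varsort zs zs x b x = b := by
        unfold swapVarS; rw [if_pos rfl, swapVar_left]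
      rw [hx1]
      have hgs : QGood (qSwap x b zs X) := (qGood_swap_iff x b zs X).2 hg
      obtain ⟨y, hy⟩ := exists_not_mem_of_small (mkInsert_lt hinf (mkInsert_lt hinf
        (mkUnion_lt hinf ((occSet_small hinf hreg).1 X hg)
          ((occSet_small hinf hreg).1 _ hgs)) x) b)
      have hyb : y ≠ b := fun h => hy (Or.inl h)
      have hyx : y ≠ x := fun h => hy (Or.inr (Or.inl h))
      have hyX : y ∉ occSet X := fun h => hy (Or.inr (Or.inr (Or.inl h)))
      have hyXs : y ∉ occSet (qSwap x b zs X) := fun h => hy (Or.inr (Or.inr (Or.inr h)))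
      refine AlphaAbs.qAbs (y := y) ?_ (fresh_of_not_occSet hyXs zs)
        (fresh_of_not_occSet hyX zs) ?_
      · intro hc; rcases hc with h | h
        · exact hyb h
        · exact hyx h
      · have e1 : qSwap y b zs (qSwap x b zs X) = qSwap x y zs (qSwap y b zs X) := by
          rw [qSwap_qSwap y b x b zs zs]
          congr 1
          · unfold swapVarS
            rw [if_pos rfl]
            exact swapVar_of_ne hyx.symm hxb
          · unfold swapVarS
            rw [if_pos rfl, swapVar_eq_swap]
            simp
        rw [e1]
        have h2 : Alpha (qSwap y b zs X) X :=
          ih hg y b zs (fresh_of_not_occSet hyX zs) hfbX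
        have h3 := alpha_swap.1 _ _ h2 x y zs
        rw [(qSwap_comm_pair x y zs).1 X] at h3
        exact h3
    have inv : ∀ {c : var}, QFreshAbs zs c (QAbs.qAbs xs x X) →
        (zs = xs ∧ c = x) ∨ QFresh zs c X := by
      intro c h
      cases h with
      | qAbs_bound => exact Or.inl ⟨rfl, rfl⟩
      | qAbs_body h => exact Or.inr h
    by_cases hzs : zs = xs
    · by_cases hxa : x = a
      · have hfbX : QFresh zs b X := by
          rcases inv hfb with ⟨h1, h2⟩ | h
          · exact absurd (h2.trans hxa).symm hab
          · exact h
        rw [← hxa]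
        exact key b (fun h => hab (hxa.symm.trans h)) hfbX hzs
      · by_cases hxb : x = b
        · have hfaX : QFresh zs a X := by
            rcases inv hfa with ⟨h1, h2⟩ | h
            · exact absurd (h2.trans hxb) hab
            · exact h
          rw [(qSwap_comm_pair a b zs).1 X, swapVarS_comm, ← hxb]
          exact key a (fun h => hxa h) hfaX hzs
        · have hfaX : QFresh zs a X := by
            rcases inv hfa with ⟨h1, h2⟩ | h
            · exact absurd h2.symm hxa
            · exact h
          have hfbX : QFresh zs b X := by
            rcases inv hfb with ⟨h1, h2⟩ | h
            · exact absurd h2.symm hxb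
            · exact h
          refine generic hfaX hfbX ?_
          unfold swapVarS
          rw [if_pos hzs.symm]
          exact swapVar_of_ne hxa hxb
    · have hfaX : QFresh zs a X := by
        rcases inv hfa with ⟨h1, h2⟩ | h
        · exact absurd h1 hzs
        · exact h
      have hfbX : QFresh zs b X := by
        rcases inv hfb with ⟨h1, h2⟩ | h
        · exact absurd h1 hzs
        · exact h
      refine generic hfaX hfbX ?_
      unfold swapVarS
      rw [if_neg (fun h => hzs h.symm)]

end Lemmas7

section Lemmas8
variable {var varsort index bindex opsym : Type u}

noncomputable def applySwaps (σ : List (var × var × varsort)) (X : QTerm var varsort index bindex opsym) :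
    QTerm var varsort index bindex opsym :=
  σ.foldr (fun p Y => qSwap p.1 p.2.1 p.2.2 Y) X

noncomputable def applySwapsAbs (σ : List (var × var × varsort)) (A : QAbs var varsort index bindex opsym) :
    QAbs var varsort index bindex opsym :=
  σ.foldr (fun p B => qSwapAbs p.1 p.2.1 p.2.2 B) A

noncomputable def applySwapsVar (σ : List (var × var × varsort)) (xs : varsort) (x : var) : var :=
  σ.foldr (fun p v => swapVarS var varsort p.2.2 xs p.1 p.2.1 v) x

@[simp] theorem applySwaps_nil (X : QTerm var varsort index bindex opsym) :
    applySwaps [] X = X := rfl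

@[simp] theorem applySwaps_cons (p : var × var × varsort) (σ : List (var × var × varsort))
    (X : QTerm var varsort index bindex opsym) :
    applySwaps (p :: σ) X = qSwap p.1 p.2.1 p.2.2 (applySwaps σ X) := rfl

@[simp] theorem applySwapsAbs_cons (p : var × var × varsort) (σ : List (var × var × varsort))
    (A : QAbs var varsort index bindex opsym) :
    applySwapsAbs (p :: σ) A = qSwapAbs p.1 p.2.1 p.2.2 (applySwapsAbs σ A) := rfl

theorem applySwaps_qVar (σ : List (var × var × varsort)) (xs : varsort) (x : var) :
    applySwaps σ (QTerm.qVar xs x : QTerm var varsort index bindex opsym) =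
      QTerm.qVar xs (applySwapsVar σ xs x) := by
  induction σ with
  | nil => rfl
  | cons p σ ih => rw [applySwaps_cons, ih, qSwap_qVar]; rfl

theorem applySwaps_qOp (σ : List (var × var × varsort)) (d : opsym)
    (inp : index → Option (QTerm var varsort index bindex opsym))
    (binp : bindex → Option (QAbs var varsort index bindex opsym)) :
    applySwaps σ (QTerm.qOp d inp binp) =
      QTerm.qOp d (fun i => (inp i).map (applySwaps σ))
        (fun j => (binp j).map (applySwapsAbs σ)) := by
  induction σ with
  | nil =>
    simp only [applySwaps_nil]
    congr 1
    · funext i; cases h : inp i <;> rfl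
    · funext j; cases h : binp j <;> rfl
  | cons p σ ih =>
    rw [applySwaps_cons, ih, qSwap_qOp]
    congr 1
    · funext i; cases h : inp i <;> rfl
    · funext j; cases h : binp j <;> rfl

theorem applySwapsAbs_qAbs (σ : List (var × var × varsort)) (xs : varsort) (x : var)
    (X : QTerm var varsort index bindex opsym) :
    applySwapsAbs σ (QAbs.qAbs xs x X) =
      QAbs.qAbs xs (applySwapsVar σ xs x) (applySwaps σ X) := by
  induction σ with
  | nil => rfl
  | cons p σ ih => rw [applySwapsAbs_cons, ih, qSwapAbs_qAbs]; rfl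

theorem applySwaps_good (σ : List (var × var × varsort))
    {X : QTerm var varsort index bindex opsym} (h : QGood X) : QGood (applySwaps σ X) := by
  induction σ with
  | nil => exact h
  | cons p σ ih => exact (qGood_swap_pair _ _ _).1 _ ih

/-- transitivity of alpha on good quasiterms -/
theorem alpha_trans (hinf : Cardinal.aleph0 ≤ Cardinal.mk var)
    (hreg : (Cardinal.mk var).IsRegular) :
    (∀ X : QTerm var varsort index bindex opsym, QGood X →
      ∀ (σ : List (var × var × varsort)) Y Z,
        Alpha (applySwaps σ X) Y → Alpha Y Z → Alpha (applySwaps σ X) Z) ∧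
    (∀ A : QAbs var varsort index bindex opsym, QGoodAbs A →
      ∀ (σ : List (var × var × varsort)) B C,
        AlphaAbs (applySwapsAbs σ A) B → AlphaAbs B C → AlphaAbs (applySwapsAbs σ A) C) := by
  refine qind (P := fun X => QGood X → ∀ σ Y Z,
      Alpha (applySwaps σ X) Y → Alpha Y Z → Alpha (applySwaps σ X) Z)
    (Q := fun A => QGoodAbs A → ∀ σ B C,
      AlphaAbs (applySwapsAbs σ A) B → AlphaAbs B C → AlphaAbs (applySwapsAbs σ A) C) ?_ ?_ ?_
  · intro xs x _ σ Y Z h1 h2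
    rw [applySwaps_qVar] at h1 ⊢
    cases h1
    cases h2
    exact Alpha.qVar
  · intro d inp binp ih1 ih2 hgop σ Y Z h1 h2
    cases hgop with
    | qOp hg1 hg2 hs1 hs2 =>
    rw [applySwaps_qOp] at h1 ⊢
    cases h1 with
    | @qOp _ _ _ inp2 binp2 hd1 hc1 hd1' hc1' =>
    cases h2 with
    | @qOp _ _ _ inp3 binp3 hd2 hc2 hd2' hc2' =>
    refine Alpha.qOp (fun i => (hd1 i).trans (hd2 i)) ?_
      (fun j => (hd1' j).trans (hd2' j)) ?_
    · intro i X1 X3 hX1 hX3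
      rcases Option.map_eq_some_iff.1 hX1 with ⟨X0, h0, rfl⟩
      obtain ⟨X2, hX2⟩ : ∃ X2, inp2 i = some X2 := by
        refine Option.ne_none_iff_exists'.1 (fun hn => ?_)
        exact Option.some_ne_none _ (hX1.symm.trans ((hd1 i).2 hn))
      exact ih1 i X0 h0 (hg1 i X0 h0) σ X2 X3 (hc1 i _ X2 hX1 hX2) (hc2 i X2 X3 hX2 hX3)
    · intro j A1 A3 hA1 hA3
      rcases Option.map_eq_some_iff.1 hA1 with ⟨A0, h0, rfl⟩
      obtain ⟨A2, hA2⟩ : ∃ A2, binp2 j = some A2 := by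
        refine Option.ne_none_iff_exists'.1 (fun hn => ?_)
        exact Option.some_ne_none _ (hA1.symm.trans ((hd1' j).2 hn))
      exact ih2 j A0 h0 (hg2 j A0 h0) σ A2 A3 (hc1' j _ A2 hA1 hA2) (hc2' j A2 A3 hA2 hA3)
  · intro xs x X ih hgA σ B C h1 h2
    cases hgA with
    | qAbs hg =>
    rw [applySwapsAbs_qAbs] at h1 ⊢
    set a := applySwapsVar σ xs x with ha
    set P0 := applySwaps σ X with hP0
    cases h1 with
    | @qAbs _ _ b _ Q0 y1 hy1 hf1P hf1Q ha1 =>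
    cases h2 with
    | @qAbs _ _ c _ R0 y2 hy2 hf2Q hf2R ha2 =>
    have hP0g : QGood P0 := by rw [hP0]; exact applySwaps_good σ hg
    have h1g : QGood (qSwap y1 a xs P0) := (qGood_swap_pair _ _ _).1 _ hP0g
    have hQsg : QGood (qSwap y1 b xs Q0) := (alpha_good.1 _ _ ha1).1 h1g
    have hQ0g : QGood Q0 := (qGood_swap_iff _ _ _ _).1 hQsg
    have h2g : QGood (qSwap y2 b xs Q0) := (qGood_swap_pair _ _ _).1 _ hQ0g
    have hRsg : QGood (qSwap y2 c xs R0) := (alpha_good.1 _ _ ha2).1 h2g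
    have hR0g : QGood R0 := (qGood_swap_iff _ _ _ _).1 hRsg
    have hsP := (occSet_small hinf hreg).1 P0 hP0g
    have hsQ := (occSet_small hinf hreg).1 Q0 hQ0g
    have hsR := (occSet_small hinf hreg).1 R0 hR0g
    obtain ⟨y, hy⟩ := exists_not_mem_of_small (mkInsert_lt hinf (mkInsert_lt hinf
      (mkInsert_lt hinf (mkInsert_lt hinf (mkInsert_lt hinf
        (mkUnion_lt hinf hsP (mkUnion_lt hinf hsQ hsR)) y2) y1) c) b) a)
    simp only [Set.mem_insert_iff, Set.mem_union, not_or] at hy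
    obtain ⟨hya, hyb, hyc, hyy1, hyy2, hyP, hyQ, hyR⟩ := hy
    have fyP := fresh_of_not_occSet hyP xs
    have fyQ := fresh_of_not_occSet hyQ xs
    have fyR := fresh_of_not_occSet hyR xs
    have trP : ∀ (u : var) Y Z, Alpha (qSwap u a xs P0) Y → Alpha Y Z →
        Alpha (qSwap u a xs P0) Z := by
      intro u Y Z h1 h2
      have := ih hg ((u, a, xs) :: σ) Y Z
      rw [applySwaps_cons, ← hP0] at this
      exact this h1 h2
    have comm : ∀ (u w : var) (T : QTerm var varsort index bindex opsym), w ≠ y → w ≠ u →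
        qSwap y u xs (qSwap u w xs T) = qSwap y w xs (qSwap y u xs T) := by
      intro u w T hwy hwu
      rw [qSwap_qSwap y u u w xs xs]
      congr 1
      · unfold swapVarS
        rw [if_pos rfl, swapVar_eq_swap]
        simp
      · unfold swapVarS
        rw [if_pos rfl]
        exact swapVar_of_ne hwy hwu
    have FS := (alpha_fresh_swap (var := var) (varsort := varsort) (index := index)
      (bindex := bindex) (opsym := opsym) hinf hreg).1
    have symmT := (alpha_symm (var := var) (varsort := varsort) (index := index)
      (bindex := bindex) (opsym := opsym)).1
    have swE := (alpha_swap (var := var) (varsort := varsort) (index := index)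
      (bindex := bindex) (opsym := opsym)).1
    have ha1' : a ≠ y1 := fun h => hy1 (Or.inl h.symm)
    have hb1 : b ≠ y1 := fun h => hy1 (Or.inr h.symm)
    have hb2 : b ≠ y2 := fun h => hy2 (Or.inl h.symm)
    have hc2 : c ≠ y2 := fun h => hy2 (Or.inr h.symm)
    have s1 : Alpha (qSwap y y1 xs P0) P0 := FS P0 hP0g y y1 xs fyP hf1P
    have s2 := swE _ _ s1 y a xs
    have e0 : Alpha (qSwap y a xs (qSwap y y1 xs P0)) (qSwap y b xs (qSwap y y1 xs Q0)) := by
      have := swE _ _ ha1 y y1 xs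
      rw [comm y1 a P0 (Ne.symm hya) ha1', comm y1 b Q0 (Ne.symm hyb) hb1] at this
      exact this
    have t1 := trP y _ _ (symmT _ _ s2) e0
    have s4 := swE _ _ (FS Q0 hQ0g y y1 xs fyQ hf1Q) y b xs
    have t2 := trP y _ _ t1 s4
    have s5 := swE _ _ (symmT _ _ (FS Q0 hQ0g y y2 xs fyQ hf2Q)) y b xs
    have t3 := trP y _ _ t2 s5
    have e1 : Alpha (qSwap y b xs (qSwap y y2 xs Q0)) (qSwap y c xs (qSwap y y2 xs R0)) := by
      have := swE _ _ ha2 y y2 xs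
      rw [comm y2 b Q0 (Ne.symm hyb) hb2, comm y2 c R0 (Ne.symm hyc) hc2] at this
      exact this
    have t4 := trP y _ _ t3 e1
    have s6 := swE _ _ (FS R0 hR0g y y2 xs fyR hf2R) y c xs
    have t5 := trP y _ _ t4 s6
    refine AlphaAbs.qAbs (y := y) ?_ fyP fyR t5
    intro hc
    rcases hc with h | h
    · exact hya h
    · exact hyc h

end Lemmas8

section Lemmas9
variable {var varsort index bindex opsym : Type u}

theorem alphaT (hinf : Cardinal.aleph0 ≤ Cardinal.mk var)
    (hreg : (Cardinal.mk var).IsRegular)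
    {X Y Z : QTerm var varsort index bindex opsym} (hg : QGood X)
    (h1 : Alpha X Y) (h2 : Alpha Y Z) : Alpha X Z :=
  (alpha_trans hinf hreg).1 X hg [] Y Z h1 h2

theorem alphaTAbs (hinf : Cardinal.aleph0 ≤ Cardinal.mk var)
    (hreg : (Cardinal.mk var).IsRegular)
    {A B C : QAbs var varsort index bindex opsym} (hg : QGoodAbs A)
    (h1 : AlphaAbs A B) (h2 : AlphaAbs B C) : AlphaAbs A C :=
  (alpha_trans hinf hreg).2 A hg [] B C h1 h2

theorem eqvGen_good (hinf : Cardinal.aleph0 ≤ Cardinal.mk var)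
    (hreg : (Cardinal.mk var).IsRegular)
    {a b : QTerm var varsort index bindex opsym} (h : Relation.EqvGen Alpha a b) :
    (QGood a → QGood b ∧ Alpha a b) ∧ (QGood b → QGood a ∧ Alpha b a) := by
  induction h with
  | rel x y hr =>
    exact ⟨fun hg => ⟨(alpha_good.1 _ _ hr).1 hg, hr⟩,
      fun hg => ⟨(alpha_good.1 _ _ hr).2 hg, alpha_symm.1 _ _ hr⟩⟩
  | refl x =>
    exact ⟨fun hg => ⟨hg, (alpha_refl hinf hreg).1 x hg⟩,
      fun hg => ⟨hg, (alpha_refl hinf hreg).1 x hg⟩⟩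
  | symm x y h ih => exact ⟨ih.2, ih.1⟩
  | trans x y z h1 h2 ih1 ih2 =>
    constructor
    · intro hg
      obtain ⟨hgy, hxy⟩ := ih1.1 hg
      obtain ⟨hgz, hyz⟩ := ih2.1 hgy
      exact ⟨hgz, alphaT hinf hreg hg hxy hyz⟩
    · intro hg
      obtain ⟨hgy, hzy⟩ := ih2.2 hg
      obtain ⟨hgx, hyx⟩ := ih1.2 hgy
      exact ⟨hgx, alphaT hinf hreg hg hzy hyx⟩

theorem eqvGenAbs_good (hinf : Cardinal.aleph0 ≤ Cardinal.mk var)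
    (hreg : (Cardinal.mk var).IsRegular)
    {a b : QAbs var varsort index bindex opsym} (h : Relation.EqvGen AlphaAbs a b) :
    (QGoodAbs a → QGoodAbs b ∧ AlphaAbs a b) ∧ (QGoodAbs b → QGoodAbs a ∧ AlphaAbs b a) := by
  induction h with
  | rel x y hr =>
    exact ⟨fun hg => ⟨(alpha_good.2 _ _ hr).1 hg, hr⟩,
      fun hg => ⟨(alpha_good.2 _ _ hr).2 hg, alpha_symm.2 _ _ hr⟩⟩
  | refl x =>
    exact ⟨fun hg => ⟨hg, (alpha_refl hinf hreg).2 x hg⟩,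
      fun hg => ⟨hg, (alpha_refl hinf hreg).2 x hg⟩⟩
  | symm x y h ih => exact ⟨ih.2, ih.1⟩
  | trans x y z h1 h2 ih1 ih2 =>
    constructor
    · intro hg
      obtain ⟨hgy, hxy⟩ := ih1.1 hg
      obtain ⟨hgz, hyz⟩ := ih2.1 hgy
      exact ⟨hgz, alphaTAbs hinf hreg hg hxy hyz⟩
    · intro hg
      obtain ⟨hgy, hzy⟩ := ih2.2 hg
      obtain ⟨hgx, hyx⟩ := ih1.2 hgy
      exact ⟨hgx, alphaTAbs hinf hreg hg hzy hyx⟩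

theorem tmk_eq_iff {X Y : QTerm var varsort index bindex opsym} :
    tmk X = tmk Y ↔ Relation.EqvGen Alpha X Y := Quot.eq

theorem amk_eq_iff {A B : QAbs var varsort index bindex opsym} :
    amk A = amk B ↔ Relation.EqvGen AlphaAbs A B := Quot.eq

theorem tmk_trep (X : Term var varsort index bindex opsym) : tmk (trep X) = X :=
  Quot.out_eq X

theorem amk_arep (A : Abstr var varsort index bindex opsym) : amk (arep A) = A :=
  Quot.out_eq A

theorem trep_tmk_good (hinf : Cardinal.aleph0 ≤ Cardinal.mk var)
    (hreg : (Cardinal.mk var).IsRegular)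
    {X0 : QTerm var varsort index bindex opsym} (hg : QGood X0) :
    QGood (trep (tmk X0)) ∧ Alpha X0 (trep (tmk X0)) := by
  have h : tmk (trep (tmk X0)) = tmk X0 := tmk_trep _
  have := (eqvGen_good hinf hreg (tmk_eq_iff.1 h)).2 hg
  exact this

theorem arep_amk_good (hinf : Cardinal.aleph0 ≤ Cardinal.mk var)
    (hreg : (Cardinal.mk var).IsRegular)
    {A0 : QAbs var varsort index bindex opsym} (hg : QGoodAbs A0) :
    QGoodAbs (arep (amk A0)) ∧ AlphaAbs A0 (arep (amk A0)) := by
  have h : amk (arep (amk A0)) = amk A0 := amk_arep _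
  exact (eqvGenAbs_good hinf hreg (amk_eq_iff.1 h)).2 hg

theorem abs_cong (hinf : Cardinal.aleph0 ≤ Cardinal.mk var)
    (hreg : (Cardinal.mk var).IsRegular)
    {X X' : QTerm var varsort index bindex opsym} (hg : QGood X) (hg' : QGood X')
    (ha : Alpha X X') (xs : varsort) (x : var) :
    AlphaAbs (QAbs.qAbs xs x X) (QAbs.qAbs xs x X') := by
  obtain ⟨y, hy⟩ := exists_not_mem_of_small (mkInsert_lt hinf
    (mkUnion_lt hinf ((occSet_small hinf hreg).1 X hg)
      ((occSet_small hinf hreg).1 X' hg')) x)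
  simp only [Set.mem_insert_iff, Set.mem_union, not_or] at hy
  obtain ⟨hyx, hyX, hyX'⟩ := hy
  refine AlphaAbs.qAbs (y := y) ?_ (fresh_of_not_occSet hyX xs) (fresh_of_not_occSet hyX' xs)
    (alpha_swap.1 _ _ ha y x xs)
  intro hc
  rcases hc with h | h <;> exact hyx h

end Lemmas9
/-- `Var` and `Op` behave like free constructors on (good) terms:
exhaustiveness, injectivity and non-overlapping. -/
theorem constructors_free (hinf : Cardinal.aleph0 ≤ Cardinal.mk var)
    (hreg : (Cardinal.mk var).IsRegular) :
    -- (1) exhaustiveness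
    ((∀ X : Term var varsort index bindex opsym, good X →
        (∃ xs x, X = Var xs x) ∨
        (∃ d inp binp, liftP good inp ∧ liftP goodAbs binp ∧
          smallDom var inp ∧ smallDom var binp ∧ X = Op d inp binp)) ∧
     (∀ A : Abstr var varsort index bindex opsym, goodAbs A →
        ∃ xs x X, good X ∧ A = Abs xs x X)) ∧
    -- (2) injectivity of Var
    (∀ xs xs' : varsort, ∀ x x' : var,
      (Var xs x : Term var varsort index bindex opsym) = Var xs' x' → xs = xs' ∧ x = x') ∧
    -- (3) injectivity of Op on good inputs
    (∀ d d' : opsym, ∀ inp inp' : Input index (Term var varsort index bindex opsym),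
      ∀ binp binp' : Input bindex (Abstr var varsort index bindex opsym),
      liftP good inp → liftP goodAbs binp → smallDom var inp → smallDom var binp →
      liftP good inp' → liftP goodAbs binp' → smallDom var inp' → smallDom var binp' →
      Op d inp binp = Op d' inp' binp' → d = d' ∧ inp = inp' ∧ binp = binp') ∧
    -- (4) Var and Op do not overlap
    (∀ xs : varsort, ∀ x : var, ∀ d : opsym, ∀ inp : Input index (Term var varsort index bindex opsym),
      ∀ binp : Input bindex (Abstr var varsort index bindex opsym), Var xs x ≠ Op d inp binp) := by
  have TG : ∀ {X0 : QTerm var varsort index bindex opsym}, QGood X0 →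
      QGood (trep (tmk X0)) ∧ Alpha X0 (trep (tmk X0)) :=
    fun h => trep_tmk_good hinf hreg h
  have AG : ∀ {A0 : QAbs var varsort index bindex opsym}, QGoodAbs A0 →
      QGoodAbs (arep (amk A0)) ∧ AlphaAbs A0 (arep (amk A0)) :=
    fun h => arep_amk_good hinf hreg h
  refine ⟨⟨?_, ?_⟩, ?_, ?_, ?_⟩
  · -- exhaustiveness for terms
    intro X hgX
    have hg0 : QGood (trep X) := hgX
    cases h : trep X with
    | qVar xs x =>
      left
      exact ⟨xs, x, by rw [← tmk_trep X, h]; rfl⟩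
    | qOp d I B =>
      right
      rw [h] at hg0
      cases hg0 with
      | qOp hg1 hg2 hs1 hs2 =>
      refine ⟨d, fun i => (I i).map tmk, fun j => (B j).map amk, ?_, ?_, ?_, ?_, ?_⟩
      · intro i t ht
        rcases Option.map_eq_some_iff.1 ht with ⟨X0, h0, rfl⟩
        exact (TG (hg1 i X0 h0)).1
      · intro j t ht
        rcases Option.map_eq_some_iff.1 ht with ⟨A0, h0, rfl⟩
        exact (AG (hg2 j A0 h0)).1
      · exact (smallDom_map tmk).2 hs1
      · exact (smallDom_map amk).2 hs2
      · rw [← tmk_trep X, h]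
        refine tmk_eq_iff.2 (Relation.EqvGen.rel _ _ ?_)
        refine Alpha.qOp ?_ ?_ ?_ ?_
        · intro i; cases h0 : I i <;> simp [liftF, h0]
        · intro i X0 X'' h0 h0'
          have he : X'' = trep (tmk X0) := by
            simp only [liftF, h0, Option.map_map, Option.map_some] at h0'
            exact (Option.some_inj.1 h0').symm
          subst he
          exact (TG (hg1 i X0 h0)).2
        · intro j; cases h0 : B j <;> simp [liftF, h0]
        · intro j A0 A'' h0 h0'
          have he : A'' = arep (amk A0) := by
            simp only [liftF, h0, Option.map_map, Option.map_some] at h0'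
            exact (Option.some_inj.1 h0').symm
          subst he
          exact (AG (hg2 j A0 h0)).2
  · -- exhaustiveness for abstractions
    intro A hgA
    have hg0 : QGoodAbs (arep A) := hgA
    cases h : arep A with
    | qAbs xs x X0 =>
      rw [h] at hg0
      cases hg0 with
      | qAbs hgX0 =>
      refine ⟨xs, x, tmk X0, (TG hgX0).1, ?_⟩
      rw [← amk_arep A, h]
      exact amk_eq_iff.2 (Relation.EqvGen.rel _ _
        (abs_cong hinf hreg hgX0 (TG hgX0).1 (TG hgX0).2 xs x))
  · -- injectivity of Var
    intro xs xs' x x' h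
    have h' : tmk (QTerm.qVar xs x : QTerm var varsort index bindex opsym) =
        tmk (QTerm.qVar xs' x') := h
    have ha := ((eqvGen_good hinf hreg (tmk_eq_iff.1 h')).1 QGood.qVar).2
    cases ha
    exact ⟨rfl, rfl⟩
  · -- injectivity of Op
    intro d d' inp inp' binp binp' hP1 hP2 hs1 hs2 hP1' hP2' hs1' hs2' h
    have hgL : QGood (QTerm.qOp d (liftF trep inp) (liftF arep binp)) := by
      refine QGood.qOp ?_ ?_ ?_ ?_
      · intro i X hX
        rcases Option.map_eq_some_iff.1 hX with ⟨t, h0, rfl⟩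
        exact hP1 i t h0
      · intro j A hA
        rcases Option.map_eq_some_iff.1 hA with ⟨t, h0, rfl⟩
        exact hP2 j t h0
      · exact (smallDom_map trep).2 hs1
      · exact (smallDom_map arep).2 hs2
    have h' : tmk (QTerm.qOp d (liftF trep inp) (liftF arep binp)) =
        tmk (QTerm.qOp d' (liftF trep inp') (liftF arep binp')) := h
    have ha := ((eqvGen_good hinf hreg (tmk_eq_iff.1 h')).1 hgL).2
    cases ha with
    | qOp hdom hcomp hdomb hcompb =>
    refine ⟨rfl, ?_, ?_⟩
    · funext i
      cases h1 : inp i with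
      | none =>
        cases h2 : inp' i with
        | none => rfl
        | some t' =>
          exfalso
          have := (hdom i).1 (by simp [liftF, h1])
          simp [liftF, h2] at this
      | some t =>
        cases h2 : inp' i with
        | none =>
          exfalso
          have := (hdom i).2 (by simp [liftF, h2])
          simp [liftF, h1] at this
        | some t' =>
          have ha2 := hcomp i (trep t) (trep t') (by simp [liftF, h1]) (by simp [liftF, h2])
          have he : tmk (trep t) = tmk (trep t') := Quot.sound ha2
          rw [tmk_trep, tmk_trep] at he
          rw [he]
    · funext j
      cases h1 : binp j with
      | none =>
        cases h2 : binp' j with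
        | none => rfl
        | some t' =>
          exfalso
          have := (hdomb j).1 (by simp [liftF, h1])
          simp [liftF, h2] at this
      | some t =>
        cases h2 : binp' j with
        | none =>
          exfalso
          have := (hdomb j).2 (by simp [liftF, h2])
          simp [liftF, h1] at this
        | some t' =>
          have ha2 := hcompb j (arep t) (arep t') (by simp [liftF, h1]) (by simp [liftF, h2])
          have he : amk (arep t) = amk (arep t') := Quot.sound ha2
          rw [amk_arep, amk_arep] at he
          rw [he]
  · -- non-overlap
    intro xs x d inp binp h
    have h' : tmk (QTerm.qVar xs x : QTerm var varsort index bindex opsym) =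
        tmk (QTerm.qOp d (liftF trep inp) (liftF arep binp)) := h
    have ha := ((eqvGen_good hinf hreg (tmk_eq_iff.1 h')).1 QGood.qVar).2
    cases ha


end Binding
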